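/- In the Skolem-style reduction, the auxiliary variables are uniquely determined: for each solution (x₁,...,x_p) ∈ ℕ^p of D = 0, there is a unique tuple (x_{p+1},...,xₙ) ∈ ℕ^{n-p} such that (x₁,...,xₙ) solves the system T; consequently D = 0 and T have the same number of solutions in ℕ. -/

import Mathlib

/-- An equation of one of the forms x_k = 1, x_i + x_j = x_k, x_i · x_j = x_k,
coded by the indices of its variables. -/
abbrev DEqn : Type := ℕ ⊕ (ℕ × ℕ × ℕ) ⊕ (ℕ × ℕ × ℕ)

/-- The equation coded by `e` holds under the valuation `v`. -/
def DEqn.holds (v : ℕ → ℕ) : DEqn → Prop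
  | Sum.inl k => v k = 1
  | Sum.inr (Sum.inl (i, j, k)) => v i + v j = v k
  | Sum.inr (Sum.inr (i, j, k)) => v i * v j = v k

/-- The equation `e` belongs to E_n, i.e., all its variable indices are among x_1,...,x_n
(0-indexed: < n). -/
def DEqn.inE (n : ℕ) : DEqn → Prop
  | Sum.inl k => k < n
  | Sum.inr (Sum.inl (i, j, k)) => i < n ∧ j < n ∧ k < n
  | Sum.inr (Sum.inr (i, j, k)) => i < n ∧ j < n ∧ k < n

/-- Extend a tuple x ∈ ℕⁿ to a valuation ℕ → ℕ (zero outside). -/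
def extVal (n : ℕ) (x : Fin n → ℕ) : ℕ → ℕ := fun i => if h : i < n then x ⟨i, h⟩ else 0

/-- The set of solutions in ℕⁿ of the system S. -/
def SolSet (n : ℕ) (S : Set DEqn) : Set (Fin n → ℕ) :=
  {x | ∀ e ∈ S, DEqn.holds (extVal n x) e}

/-- `b` is an admissible bound for n and κ: every system S ⊆ E_n which is solvable in ℕⁿ
and has fewer than κ solutions in ℕⁿ has a solution with all coordinates ≤ b.
(f_κ(n) is the least such b.) -/
def IsBound (κ : Cardinal) (n b : ℕ) : Prop :=
  ∀ S : Set DEqn, (∀ e ∈ S, DEqn.inE n e) → (SolSet n S).Nonempty →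
    Cardinal.mk (SolSet n S) < κ → ∃ x ∈ SolSet n S, ∀ i, x i ≤ b

namespace Stmt10

lemma inE_mono {n n' : ℕ} (h : n ≤ n') {e : DEqn} (he : DEqn.inE n e) : DEqn.inE n' e := by
  rcases e with k | ⟨⟨i, j, k⟩⟩ | ⟨⟨i, j, k⟩⟩ <;> simp only [DEqn.inE] at * <;> omega

inductive Expr (p : ℕ) : Type where
  | one : Expr p
  | var : Fin p → Expr p
  | add : Expr p → Expr p → Expr p
  | mul : Expr p → Expr p → Expr p

def Expr.eval {p : ℕ} (x : Fin p → ℕ) : Expr p → ℕ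
  | .one => 1
  | .var i => x i
  | .add a b => a.eval x + b.eval x
  | .mul a b => a.eval x * b.eval x

/-- Compile an expression to (equations, output index, next fresh index), fresh vars from m. -/
def comp {p : ℕ} : Expr p → ℕ → List DEqn × ℕ × ℕ
  | .one, m => ([Sum.inl m], m, m + 1)
  | .var i, m => ([], i.val, m)
  | .add a b, m =>
      let r1 := comp a m
      let r2 := comp b r1.2.2
      (r1.1 ++ r2.1 ++ [Sum.inr (Sum.inl (r1.2.1, r2.2.1, r2.2.2))], r2.2.2, r2.2.2 + 1)
  | .mul a b, m =>
      let r1 := comp a m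
      let r2 := comp b r1.2.2
      (r1.1 ++ r2.1 ++ [Sum.inr (Sum.inr (r1.2.1, r2.2.1, r2.2.2))], r2.2.2, r2.2.2 + 1)

def base {p : ℕ} (x : Fin p → ℕ) : ℕ → ℕ := fun k => if h : k < p then x ⟨k, h⟩ else 0

/-- The canonical valuation of all variables when the block of `e` is laid out from `m`. -/
def ext {p : ℕ} (x : Fin p → ℕ) : Expr p → ℕ → ℕ → ℕ
  | .one, m, k => if k = m then 1 else base x k
  | .var _, _, k => base x k
  | .add a b, m, k =>
      if k = (comp b (comp a m).2.2).2.2 then a.eval x + b.eval x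
      else if (comp a m).2.2 ≤ k then ext x b (comp a m).2.2 k
      else ext x a m k
  | .mul a b, m, k =>
      if k = (comp b (comp a m).2.2).2.2 then a.eval x * b.eval x
      else if (comp a m).2.2 ≤ k then ext x b (comp a m).2.2 k
      else ext x a m k


theorem comp_spec {p : ℕ} (x : Fin p → ℕ) (e : Expr p) : ∀ m, p ≤ m →
    m ≤ (comp e m).2.2 ∧
    (comp e m).2.1 < (comp e m).2.2 ∧
    (∀ eq ∈ (comp e m).1, DEqn.inE (comp e m).2.2 eq) ∧
    (∀ k, k < m ∨ (comp e m).2.2 ≤ k → ext x e m k = base x k) ∧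
    (∀ v : ℕ → ℕ, (∀ i (h : i < p), v i = x ⟨i, h⟩) →
      ((∀ k, m ≤ k → k < (comp e m).2.2 → v k = ext x e m k) → v (comp e m).2.1 = e.eval x) ∧
      ((∀ eq ∈ (comp e m).1, DEqn.holds v eq) ↔
        (∀ k, m ≤ k → k < (comp e m).2.2 → v k = ext x e m k))) := by
  induction e with
  | one =>
      intro m hm
      refine ⟨by simp [comp], by simp [comp], by simp [comp, DEqn.inE], ?_, ?_⟩
      · intro k hk
        simp only [comp] at hk
        simp [ext, show k ≠ m by omega]
      · intro v hv
        constructor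
        · intro hval
          have := hval m (le_refl m) (by simp [comp])
          simpa [ext, Expr.eval, comp] using this
        · simp only [comp, List.mem_singleton, forall_eq]
          constructor
          · intro h k hk1 hk2
            have : k = m := by omega
            subst this
            simpa [ext, DEqn.holds] using h
          · intro h
            have := h m (le_refl m) (by omega)
            simpa [ext, DEqn.holds] using this
  | var i =>
      intro m hm
      refine ⟨by simp [comp], by simp [comp]; omega, by simp [comp], ?_, ?_⟩
      · intro k _; rfl
      · intro v hv
        refine ⟨fun _ => ?_, by simp [comp]; omega⟩
        simp only [comp, Expr.eval]
        exact hv i.val i.isLt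
  | add a b iha ihb =>
      intro m hm
      obtain ⟨ha1, ha2, ha3, ha4, ha5⟩ := iha m hm
      obtain ⟨hb1, hb2, hb3, hb4, hb5⟩ := ihb (comp a m).2.2 (hm.trans ha1)
      set m1 := (comp a m).2.2 with hm1
      set m2 := (comp b m1).2.2 with hm2
      have hc1 : (comp (Expr.add a b) m).1 =
          (comp a m).1 ++ (comp b m1).1 ++
            [Sum.inr (Sum.inl ((comp a m).2.1, (comp b m1).2.1, m2))] := rfl
      have hc2 : (comp (Expr.add a b) m).2.1 = m2 := rfl
      have hc3 : (comp (Expr.add a b) m).2.2 = m2 + 1 := rfl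
      have hext : ∀ k, ext x (Expr.add a b) m k =
          if k = m2 then a.eval x + b.eval x
          else if m1 ≤ k then ext x b m1 k else ext x a m k := fun k => rfl
      rw [hc1, hc2, hc3]
      refine ⟨by omega, by omega, ?_, ?_, ?_⟩
      · intro eq heq
        simp only [List.mem_append, List.mem_singleton] at heq
        rcases heq with (h | h) | h
        · exact inE_mono (by omega) (ha3 eq h)
        · exact inE_mono (by omega) (hb3 eq h)
        · subst h; refine ⟨by omega, by omega, by omega⟩
      · intro k hk
        rw [hext]
        rcases hk with hk | hk
        · rw [if_neg (by omega), if_neg (by omega)]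
          exact ha4 k (Or.inl hk)
        · rw [if_neg (by omega), if_pos (by omega)]
          exact hb4 k (Or.inr (by omega))
      · intro v hv
        obtain ⟨hva, hA⟩ := ha5 v hv
        obtain ⟨hvb, hB⟩ := hb5 v hv
        have key : (∀ k, m ≤ k → k < m2 + 1 → v k =
            (if k = m2 then a.eval x + b.eval x
             else if m1 ≤ k then ext x b m1 k else ext x a m k)) →
            v (comp a m).2.1 = a.eval x ∧ v (comp b m1).2.1 = b.eval x ∧
            v m2 = a.eval x + b.eval x := by
          intro h
          have hA' : ∀ k, m ≤ k → k < m1 → v k = ext x a m k := by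
            intro k h1 h2
            have := h k h1 (by omega)
            rwa [if_neg (by omega), if_neg (by omega)] at this
          have hB' : ∀ k, m1 ≤ k → k < m2 → v k = ext x b m1 k := by
            intro k h1 h2
            have := h k (by omega) (by omega)
            rwa [if_neg (by omega), if_pos h1] at this
          have := h m2 (by omega) (by omega)
          rw [if_pos rfl] at this
          exact ⟨hva hA', hvb hB', this⟩
        constructor
        · intro h
          simp only [hext] at h
          exact (key h).2.2
        · constructor
          · intro h k hk1 hk2
            simp only [List.mem_append, List.mem_singleton] at h
            have hEa := hA.1 (fun eq heq => h eq (Or.inl (Or.inl heq)))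
            have hEb := hB.1 (fun eq heq => h eq (Or.inl (Or.inr heq)))
            have h3 := h _ (Or.inr rfl)
            simp only [DEqn.holds] at h3
            rw [hext]
            by_cases hk3 : k = m2
            · subst hk3
              rw [if_pos rfl, ← h3, hva hEa, hvb hEb]
            · rw [if_neg hk3]
              by_cases hk4 : m1 ≤ k
              · rw [if_pos hk4]; exact hEb k hk4 (by omega)
              · rw [if_neg hk4]; exact hEa k hk1 (by omega)
          · intro h
            simp only [hext] at h
            obtain ⟨h1, h2, h3⟩ := key h
            intro eq heq
            simp only [List.mem_append, List.mem_singleton] at heq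
            rcases heq with (heq | heq) | heq
            · refine hA.2 ?_ eq heq
              intro k hk1 hk2
              have := h k hk1 (by omega)
              rwa [if_neg (by omega), if_neg (by omega)] at this
            · refine hB.2 ?_ eq heq
              intro k hk1 hk2
              have := h k (by omega) (by omega)
              rwa [if_neg (by omega), if_pos hk1] at this
            · subst heq
              simp only [DEqn.holds]
              rw [h1, h2, h3]
  | mul a b iha ihb =>
      intro m hm
      obtain ⟨ha1, ha2, ha3, ha4, ha5⟩ := iha m hm
      obtain ⟨hb1, hb2, hb3, hb4, hb5⟩ := ihb (comp a m).2.2 (hm.trans ha1)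
      set m1 := (comp a m).2.2 with hm1
      set m2 := (comp b m1).2.2 with hm2
      have hc1 : (comp (Expr.mul a b) m).1 =
          (comp a m).1 ++ (comp b m1).1 ++
            [Sum.inr (Sum.inr ((comp a m).2.1, (comp b m1).2.1, m2))] := rfl
      have hc2 : (comp (Expr.mul a b) m).2.1 = m2 := rfl
      have hc3 : (comp (Expr.mul a b) m).2.2 = m2 + 1 := rfl
      have hext : ∀ k, ext x (Expr.mul a b) m k =
          if k = m2 then a.eval x * b.eval x
          else if m1 ≤ k then ext x b m1 k else ext x a m k := fun k => rfl
      rw [hc1, hc2, hc3]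
      refine ⟨by omega, by omega, ?_, ?_, ?_⟩
      · intro eq heq
        simp only [List.mem_append, List.mem_singleton] at heq
        rcases heq with (h | h) | h
        · exact inE_mono (by omega) (ha3 eq h)
        · exact inE_mono (by omega) (hb3 eq h)
        · subst h; refine ⟨by omega, by omega, by omega⟩
      · intro k hk
        rw [hext]
        rcases hk with hk | hk
        · rw [if_neg (by omega), if_neg (by omega)]
          exact ha4 k (Or.inl hk)
        · rw [if_neg (by omega), if_pos (by omega)]
          exact hb4 k (Or.inr (by omega))
      · intro v hv
        obtain ⟨hva, hA⟩ := ha5 v hv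
        obtain ⟨hvb, hB⟩ := hb5 v hv
        have key : (∀ k, m ≤ k → k < m2 + 1 → v k =
            (if k = m2 then a.eval x * b.eval x
             else if m1 ≤ k then ext x b m1 k else ext x a m k)) →
            v (comp a m).2.1 = a.eval x ∧ v (comp b m1).2.1 = b.eval x ∧
            v m2 = a.eval x * b.eval x := by
          intro h
          have hA' : ∀ k, m ≤ k → k < m1 → v k = ext x a m k := by
            intro k h1 h2
            have := h k h1 (by omega)
            rwa [if_neg (by omega), if_neg (by omega)] at this
          have hB' : ∀ k, m1 ≤ k → k < m2 → v k = ext x b m1 k := by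
            intro k h1 h2
            have := h k (by omega) (by omega)
            rwa [if_neg (by omega), if_pos h1] at this
          have := h m2 (by omega) (by omega)
          rw [if_pos rfl] at this
          exact ⟨hva hA', hvb hB', this⟩
        constructor
        · intro h
          simp only [hext] at h
          exact (key h).2.2
        · constructor
          · intro h k hk1 hk2
            simp only [List.mem_append, List.mem_singleton] at h
            have hEa := hA.1 (fun eq heq => h eq (Or.inl (Or.inl heq)))
            have hEb := hB.1 (fun eq heq => h eq (Or.inl (Or.inr heq)))
            have h3 := h _ (Or.inr rfl)
            simp only [DEqn.holds] at h3
            rw [hext]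
            by_cases hk3 : k = m2
            · subst hk3
              rw [if_pos rfl, ← h3, hva hEa, hvb hEb]
            · rw [if_neg hk3]
              by_cases hk4 : m1 ≤ k
              · rw [if_pos hk4]; exact hEb k hk4 (by omega)
              · rw [if_neg hk4]; exact hEa k hk1 (by omega)
          · intro h
            simp only [hext] at h
            obtain ⟨h1, h2, h3⟩ := key h
            intro eq heq
            simp only [List.mem_append, List.mem_singleton] at heq
            rcases heq with (heq | heq) | heq
            · refine hA.2 ?_ eq heq
              intro k hk1 hk2
              have := h k hk1 (by omega)
              rwa [if_neg (by omega), if_neg (by omega)] at this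
            · refine hB.2 ?_ eq heq
              intro k hk1 hk2
              have := h k (by omega) (by omega)
              rwa [if_neg (by omega), if_pos hk1] at this
            · subst heq
              simp only [DEqn.holds]
              rw [h1, h2, h3]


def ofNat (p : ℕ) : ℕ → Expr p
  | 0 => .one
  | n + 1 => .add (ofNat p n) .one

lemma ofNat_eval {p : ℕ} (x : Fin p → ℕ) (n : ℕ) : (ofNat p n).eval x = n + 1 := by
  induction n with
  | zero => rfl
  | succ n ih => simp [ofNat, Expr.eval, ih]

lemma rep {p : ℕ} (D : MvPolynomial (Fin p) ℤ) :
    ∃ e1 e2 : Expr p, ∀ x : Fin p → ℕ,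
      MvPolynomial.eval (fun i => (x i : ℤ)) D = (e1.eval x : ℤ) - (e2.eval x : ℤ) := by
  induction D using MvPolynomial.induction_on with
  | C a =>
      refine ⟨ofNat p a.toNat, ofNat p (-a).toNat, fun x => ?_⟩
      rw [MvPolynomial.eval_C, ofNat_eval, ofNat_eval]
      push_cast
      omega
  | add q r hq hr =>
      obtain ⟨a1, a2, ha⟩ := hq
      obtain ⟨b1, b2, hb⟩ := hr
      refine ⟨.add a1 b1, .add a2 b2, fun x => ?_⟩
      rw [map_add, ha, hb]
      simp only [Expr.eval]
      push_cast
      ring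
  | mul_X q i hq =>
      obtain ⟨a1, a2, ha⟩ := hq
      refine ⟨.mul a1 (.var i), .mul a2 (.var i), fun x => ?_⟩
      rw [map_mul, ha, MvPolynomial.eval_X]
      simp only [Expr.eval]
      push_cast
      ring


end Stmt10

open Stmt10 in
/-- Skolem-style reduction, Conditions 1 and 2 over ℕ: moreover the auxiliary
variables are uniquely determined: each solution (x₁,...,x_p) ∈ ℕ^p of D = 0 extends to a
unique solution (x₁,...,x_n) ∈ ℕⁿ of T; consequently D = 0 and T have the same number of
solutions in ℕ. -/
theorem stmt_10 (p : ℕ) (D : MvPolynomial (Fin p) ℤ)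
    (hdeg : ∀ i : Fin p, 1 ≤ MvPolynomial.degreeOf i D) :
    ∃ n : ℕ, ∃ hpn : p < n, ∃ T : Set DEqn, (∀ e ∈ T, DEqn.inE n e) ∧
      (∀ x : Fin p → ℕ,
        (MvPolynomial.eval (fun i => (x i : ℤ)) D = 0 ↔
          ∃ y : Fin n → ℕ, (∀ i : Fin p, y (Fin.castLE hpn.le i) = x i) ∧ y ∈ SolSet n T)) ∧
      (∀ x : Fin p → ℕ, MvPolynomial.eval (fun i => (x i : ℤ)) D = 0 →
        ∃! y : Fin n → ℕ, (∀ i : Fin p, y (Fin.castLE hpn.le i) = x i) ∧ y ∈ SolSet n T) ∧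
      Cardinal.mk {x : Fin p → ℕ | MvPolynomial.eval (fun i => (x i : ℤ)) D = 0} =
        Cardinal.mk (SolSet n T) := by
  obtain ⟨e1, e2, hrep⟩ := rep D
  have hDx : ∀ x : Fin p → ℕ,
      (MvPolynomial.eval (fun i => (x i : ℤ)) D = 0 ↔ e1.eval x = e2.eval x) := by
    intro x; rw [hrep x]; omega
  set m1 := (comp e1 p).2.2 with hm1
  set m2 := (comp e2 m1).2.2 with hm2
  set o1 := (comp e1 p).2.1 with ho1
  set o2 := (comp e2 m1).2.1 with ho2
  set n := m2 + 1 with hn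
  -- basic index facts (x-independent parts of the spec)
  obtain ⟨s11, s12, s13, _, _⟩ := comp_spec (fun _ => 0) e1 p (le_refl p)
  obtain ⟨s21, s22, s23, _, _⟩ := comp_spec (fun _ => 0) e2 m1 s11
  have hpn : p < n := by omega
  set L : List DEqn := (comp e1 p).1 ++ (comp e2 m1).1 ++
      [Sum.inr (Sum.inl (o1, m2, o2)), Sum.inr (Sum.inl (o2, m2, o1))] with hL
  set T : Set DEqn := {d | d ∈ L} with hT
  -- canonical extension
  set V : (Fin p → ℕ) → ℕ → ℕ := fun x k =>
      if k = m2 then 0 else if m1 ≤ k then ext x e2 m1 k else ext x e1 p k with hV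
  set Y : (Fin p → ℕ) → Fin n → ℕ := fun x i => V x i.val with hY
  have hVlow : ∀ (x : Fin p → ℕ) i (h : i < p), V x i = x ⟨i, h⟩ := by
    intro x i h
    obtain ⟨_, _, _, s14, _⟩ := comp_spec x e1 p (le_refl p)
    have : V x i = ext x e1 p i := by
      simp only [hV]
      rw [if_neg (by omega), if_neg (by omega)]
    rw [this, s14 i (Or.inl h)]
    simp only [base]
    rw [dif_pos h]
  have hmemL : ∀ d : DEqn, d ∈ T ↔ d ∈ L := fun d => Iff.rfl
  -- key lemma, forward direction
  have key1 : ∀ (x : Fin p → ℕ) (y : Fin n → ℕ),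
      (∀ i : Fin p, y (Fin.castLE hpn.le i) = x i) → y ∈ SolSet n T →
      e1.eval x = e2.eval x ∧ ∀ i : Fin n, y i = V x i.val := by
    intro x y hy hsol
    set v := extVal n y with hv
    have hvlow : ∀ i (h : i < p), v i = x ⟨i, h⟩ := by
      intro i h
      have : v i = y ⟨i, by omega⟩ := by
        simp only [hv, extVal]
        rw [dif_pos (show i < n by omega)]
      rw [this]
      exact hy ⟨i, h⟩
    obtain ⟨_, _, _, s14, s15⟩ := comp_spec x e1 p (le_refl p)
    obtain ⟨_, _, _, s24, s25⟩ := comp_spec x e2 m1 s11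
    obtain ⟨val1, iff1⟩ := s15 v hvlow
    obtain ⟨val2, iff2⟩ := s25 v hvlow
    have hall : ∀ eq ∈ L, DEqn.holds v eq := fun eq he => hsol eq he
    simp only [hL, List.mem_append, List.mem_cons, List.mem_singleton, List.not_mem_nil, or_false] at hall
    have blocks1 : ∀ k, p ≤ k → k < m1 → v k = ext x e1 p k :=
      iff1.mp (fun eq he => hall eq (Or.inl (Or.inl he)))
    have blocks2 : ∀ k, m1 ≤ k → k < m2 → v k = ext x e2 m1 k :=
      iff2.mp (fun eq he => hall eq (Or.inl (Or.inr he)))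
    have hvo1 : v o1 = e1.eval x := val1 blocks1
    have hvo2 : v o2 = e2.eval x := val2 blocks2
    have hq1 : v o1 + v m2 = v o2 := hall _ (Or.inr (Or.inl rfl))
    have hq2 : v o2 + v m2 = v o1 := hall _ (Or.inr (Or.inr rfl))
    have heq : e1.eval x = e2.eval x := by omega
    have hz : v m2 = 0 := by omega
    refine ⟨heq, fun i => ?_⟩
    have hyi : y i = v i.val := by
      simp only [hv, extVal]
      rw [dif_pos i.isLt]
    rw [hyi]
    simp only [hV]
    by_cases h1 : i.val = m2
    · rw [if_pos h1, h1, hz]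
    · rw [if_neg h1]
      by_cases h2 : m1 ≤ i.val
      · rw [if_pos h2]
        exact blocks2 i.val h2 (by omega)
      · rw [if_neg h2]
        by_cases h3 : p ≤ i.val
        · exact blocks1 i.val h3 (by omega)
        · rw [s14 i.val (Or.inl (by omega)), base, dif_pos (by omega)]
          exact hvlow i.val (by omega)
  -- key lemma, backward direction
  have key2 : ∀ x : Fin p → ℕ, e1.eval x = e2.eval x →
      (∀ i : Fin p, (Y x) (Fin.castLE hpn.le i) = x i) ∧ Y x ∈ SolSet n T := by
    intro x heq
    obtain ⟨_, _, _, s14, s15⟩ := comp_spec x e1 p (le_refl p)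
    obtain ⟨_, _, _, s24, s25⟩ := comp_spec x e2 m1 s11
    have hext : extVal n (Y x) = V x := by
      funext k
      by_cases h : k < n
      · simp only [extVal]
        rw [dif_pos h]
      · simp only [extVal, hV]
        rw [dif_neg h, if_neg (by omega), if_pos (by omega), s24 k (Or.inr (by omega))]
        simp only [base]
        rw [dif_neg (by omega)]
    have hvlow : ∀ i (h : i < p), V x i = x ⟨i, h⟩ := hVlow x
    obtain ⟨val1, iff1⟩ := s15 (V x) hvlow
    obtain ⟨val2, iff2⟩ := s25 (V x) hvlow
    have blocks1 : ∀ k, p ≤ k → k < m1 → V x k = ext x e1 p k := by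
      intro k h1 h2
      simp only [hV]
      rw [if_neg (by omega), if_neg (by omega)]
    have blocks2 : ∀ k, m1 ≤ k → k < m2 → V x k = ext x e2 m1 k := by
      intro k h1 h2
      simp only [hV]
      rw [if_neg (by omega), if_pos h1]
    have hvo1 : V x o1 = e1.eval x := val1 blocks1
    have hvo2 : V x o2 = e2.eval x := val2 blocks2
    have hvz : V x m2 = 0 := by simp [hV]
    constructor
    · intro i
      show V x i.val = x i
      rw [hVlow x i.val i.isLt]
    · intro eq heq'
      rw [hext]
      have heq'' : eq ∈ L := heq'
      simp only [hL, List.mem_append, List.mem_cons, List.mem_singleton, List.not_mem_nil,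
        or_false] at heq''
      rcases heq'' with (h | h) | (h | h)
      · exact iff1.mpr blocks1 eq h
      · exact iff2.mpr blocks2 eq h
      · subst h
        show V x o1 + V x m2 = V x o2
        rw [hvo1, hvo2, hvz, heq]
        omega
      · subst h
        show V x o2 + V x m2 = V x o1
        rw [hvo1, hvo2, hvz, heq]
        omega
  refine ⟨n, hpn, T, ?_, ?_, ?_, ?_⟩
  · -- inE
    intro e he
    have he' : e ∈ L := he
    simp only [hL, List.mem_append, List.mem_cons, List.mem_singleton, List.not_mem_nil,
      or_false] at he'
    rcases he' with (h | h) | (h | h)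
    · exact inE_mono (by omega) (s13 e h)
    · exact inE_mono (by omega) (s23 e h)
    · subst h; exact ⟨by omega, by omega, by omega⟩
    · subst h; exact ⟨by omega, by omega, by omega⟩
  · -- condition 1
    intro x
    rw [hDx x]
    constructor
    · intro heq
      obtain ⟨h1, h2⟩ := key2 x heq
      exact ⟨Y x, h1, h2⟩
    · rintro ⟨y, hy1, hy2⟩
      exact (key1 x y hy1 hy2).1
  · -- condition 2
    intro x hx
    have heq := (hDx x).mp hx
    obtain ⟨h1, h2⟩ := key2 x heq
    refine ⟨Y x, ⟨h1, h2⟩, ?_⟩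
    rintro y' ⟨hy1, hy2⟩
    funext i
    exact (key1 x y' hy1 hy2).2 i
  · -- cardinal equality
    refine Cardinal.mk_congr ?_
    refine
      { toFun := fun z => ⟨Y z.1, (key2 z.1 ((hDx z.1).mp z.2)).2⟩
        invFun := fun w => ⟨fun i => w.1 (Fin.castLE hpn.le i), ?_⟩
        left_inv := ?_
        right_inv := ?_ }
    · have := (key1 (fun i => w.1 (Fin.castLE hpn.le i)) w.1 (fun _ => rfl) w.2).1
      exact (hDx _).mpr this
    · rintro ⟨x, hx⟩
      apply Subtype.ext
      funext i
      exact ((key2 x ((hDx x).mp hx)).1 i)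
    · rintro ⟨y, hy⟩
      apply Subtype.ext
      funext i
      exact ((key1 (fun j => y (Fin.castLE hpn.le j)) y (fun _ => rfl) hy).2 i).symm
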